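/- arXiv:2209.00361 — 2 statements merged into one kernel-verified Lean document; each statement's English description precedes it below -/
import Mathlib

section
/- Let f : ℝ^d → ℝ be L-gradient Lipschitz and satisfy the Polyak–Łojasiewicz condition with parameter μ > 0: ‖∇f(x)‖² ≥ 2μ(f(x) − f*) for all x, where f* = inf f. Suppose x' = x − η v + ξ with ‖ξ‖ ≤ r. Then f(x') − f* ≤ (1 − ημ)(f(x) − f*) + η‖∇f(x) − v‖² − (1/(2η) − L/2)‖x' − x‖² + r²/η. -/
set_option maxHeartbeats 1000000

open InnerProductSpace intervalIntegral

-- descent lemma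
theorem descent_aux {d : ℕ} (f : EuclideanSpace ℝ (Fin d) → ℝ) (L : ℝ)
    (hdiff : Differentiable ℝ f)
    (hlip : ∀ x y, ‖gradient f x - gradient f y‖ ≤ L * ‖x - y‖)
    (x y : EuclideanSpace ℝ (Fin d)) :
    f y ≤ f x + inner ℝ (gradient f x) (y - x) + L / 2 * ‖y - x‖ ^ 2 := by
  set Δ := y - x with hΔ
  set φ' : ℝ → ℝ := fun t => inner ℝ (gradient f (x + t • Δ)) Δ with hφ'
  have hgrad_cont : Continuous (gradient f) := by
    apply (LipschitzWith.of_dist_le_mul (K := (max L 0).toNNReal) (f := gradient f) ?_).continuous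
    intro a b
    simp only [dist_eq_norm]
    calc ‖gradient f a - gradient f b‖ ≤ L * ‖a - b‖ := hlip a b
      _ ≤ (max L 0).toNNReal * ‖a - b‖ := by
          apply mul_le_mul_of_nonneg_right _ (norm_nonneg _)
          rw [Real.coe_toNNReal _ (le_max_right _ _)]
          exact le_max_left _ _
  have hc : Continuous φ' := by
    apply Continuous.inner
    · exact hgrad_cont.comp (by continuity)
    · exact continuous_const
  have hderiv : ∀ t ∈ Set.uIcc (0:ℝ) 1, HasDerivAt (fun t => f (x + t • Δ)) (φ' t) t := by
    intro t _
    have h1 : HasDerivAt (fun t : ℝ => x + t • Δ) Δ t := by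
      simpa using ((hasDerivAt_id t).smul_const Δ).const_add x
    have h2 := ((hdiff (x + t • Δ)).hasGradientAt.hasFDerivAt).comp_hasDerivAt t h1
    simpa [hφ', gradient, InnerProductSpace.toDual_symm_apply, Function.comp_def] using h2
  have hint : IntervalIntegrable φ' MeasureTheory.volume 0 1 := hc.intervalIntegrable 0 1
  have heq : ∫ t in (0:ℝ)..1, φ' t = f (x + (1:ℝ) • Δ) - f (x + (0:ℝ) • Δ) :=
    integral_eq_sub_of_hasDerivAt hderiv hint
  have hfy : f y - f x = ∫ t in (0:ℝ)..1, φ' t := by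
    rw [heq]; simp [hΔ]
  have hmono : ∫ t in (0:ℝ)..1, φ' t ≤
      ∫ t in (0:ℝ)..1, (inner ℝ (gradient f x) Δ + L * t * ‖Δ‖ ^ 2 : ℝ) := by
    apply integral_mono_on (by norm_num) hint
    · exact (Continuous.intervalIntegrable (by continuity) 0 1)
    · intro t ht
      have h1 : φ' t - inner ℝ (gradient f x) Δ =
          inner ℝ (gradient f (x + t • Δ) - gradient f x) Δ := by
        simp [hφ', inner_sub_left]
      have h2 : (inner ℝ (gradient f (x + t • Δ) - gradient f x) Δ : ℝ) ≤ L * t * ‖Δ‖ ^ 2 := by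
        calc (inner ℝ (gradient f (x + t • Δ) - gradient f x) Δ : ℝ)
            ≤ ‖gradient f (x + t • Δ) - gradient f x‖ * ‖Δ‖ := real_inner_le_norm _ _
          _ ≤ (L * ‖(x + t • Δ) - x‖) * ‖Δ‖ := by
              apply mul_le_mul_of_nonneg_right (hlip _ _) (norm_nonneg _)
          _ = L * t * ‖Δ‖ ^ 2 := by
              rw [add_sub_cancel_left, norm_smul, Real.norm_eq_abs,
                abs_of_nonneg ht.1]
              ring
      linarith
  have hval : ∫ t in (0:ℝ)..1, (inner ℝ (gradient f x) Δ + L * t * ‖Δ‖ ^ 2 : ℝ)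
      = inner ℝ (gradient f x) Δ + L / 2 * ‖Δ‖ ^ 2 := by
    rw [integral_add (intervalIntegrable_const) (Continuous.intervalIntegrable (by continuity) 0 1)]
    simp [mul_assoc, integral_const_mul]
    ring
  rw [hval] at hmono
  linarith [hfy ▸ hmono]

theorem descent_lemma_PL {d : ℕ} (f : EuclideanSpace ℝ (Fin d) → ℝ)
    (L μ η r fstar : ℝ)
    (hdiff : Differentiable ℝ f)
    (hlip : ∀ x y, ‖gradient f x - gradient f y‖ ≤ L * ‖x - y‖)
    (hμ : 0 < μ)
    (hfstar : ∀ x, fstar ≤ f x)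
    (hPL : ∀ x, 2 * μ * (f x - fstar) ≤ ‖gradient f x‖ ^ 2)
    (hη : 0 < η) (x v ξ : EuclideanSpace ℝ (Fin d)) (hξ : ‖ξ‖ ≤ r)
    (x' : EuclideanSpace ℝ (Fin d)) (hx' : x' = x - η • v + ξ) :
    f x' - fstar ≤ (1 - η * μ) * (f x - fstar) + η * ‖gradient f x - v‖ ^ 2
      - (1 / (2 * η) - L / 2) * ‖x' - x‖ ^ 2 + r ^ 2 / η := by
  set g := gradient f x with hg
  set Δ := x' - x with hΔ
  have hdesc := descent_aux f L hdiff hlip x x'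
  have hsum : η • g + Δ = η • (g - v) + ξ := by
    rw [hΔ, hx']; module
  have hid : ‖η • (g - v) + ξ‖ ^ 2 = η ^ 2 * ‖g‖ ^ 2 + 2 * η * inner ℝ g Δ + ‖Δ‖ ^ 2 := by
    rw [← hsum, norm_add_sq_real, real_inner_smul_left, norm_smul, Real.norm_eq_abs]
    rw [mul_pow, sq_abs]
    ring
  have hbound : ‖η • (g - v) + ξ‖ ^ 2 ≤ 2 * η ^ 2 * ‖g - v‖ ^ 2 + 2 * r ^ 2 := by
    have h1 : ‖η • (g - v) + ξ‖ ≤ η * ‖g - v‖ + ‖ξ‖ := by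
      calc ‖η • (g - v) + ξ‖ ≤ ‖η • (g - v)‖ + ‖ξ‖ := norm_add_le _ _
        _ = η * ‖g - v‖ + ‖ξ‖ := by
            rw [norm_smul, Real.norm_eq_abs, abs_of_pos hη]
    have h0 : (0:ℝ) ≤ ‖ξ‖ := norm_nonneg _
    nlinarith [norm_nonneg (η • (g - v) + ξ), sq_nonneg (η * ‖g - v‖ - ‖ξ‖), hξ, mul_nonneg hη.le (norm_nonneg (g - v))]
  have hPLx := hPL x
  have h2η : (0:ℝ) < 2 * η := by linarith
  have hI : 2 * η * inner ℝ g Δ ≤ 2 * η ^ 2 * ‖g - v‖ ^ 2 + 2 * r ^ 2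
      - η ^ 2 * ‖g‖ ^ 2 - ‖Δ‖ ^ 2 := by linarith [hid ▸ hbound]
  rw [← mul_le_mul_iff_right₀ h2η]
  have hE : 2 * η * ((1 - η * μ) * (f x - fstar) + η * ‖g - v‖ ^ 2
      - (1 / (2 * η) - L / 2) * ‖Δ‖ ^ 2 + r ^ 2 / η)
      = 2 * η * (1 - η * μ) * (f x - fstar) + 2 * η ^ 2 * ‖g - v‖ ^ 2
        - (1 - L * η) * ‖Δ‖ ^ 2 + 2 * r ^ 2 := by
    field_simp
  rw [hE]
  nlinarith [hPLx, hη, mul_le_mul_of_nonneg_left hPLx (mul_nonneg hη.le hη.le)]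
end

section
/- Let f be L-gradient Lipschitz with global minimum value f*, and consider iterates x^t = x^{t−1} − η v^{t−1} + ξ^t with ‖ξ^t‖ ≤ r for t = 1,…,T, where η ≤ 1/L. Then (η/2)·∑_{t=1}^T ‖∇f(x^{t−1})‖² ≤ f(x^0) − f* + η·∑_{t=1}^T ‖∇f(x^{t−1}) − v^{t−1}‖² + T·r²/η. -/
open Finset

lemma descent_lemma {d : ℕ} (f : EuclideanSpace ℝ (Fin d) → ℝ) (L : ℝ) (hL0 : 0 ≤ L)
    (hdiff : Differentiable ℝ f)
    (hlip : ∀ x y, ‖gradient f x - gradient f y‖ ≤ L * ‖x - y‖)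
    (x y : EuclideanSpace ℝ (Fin d)) :
    f y ≤ f x + (inner ℝ (gradient f x) (y - x) : ℝ) + L / 2 * ‖y - x‖ ^ 2 := by
  set v : EuclideanSpace ℝ (Fin d) := y - x with hv
  have hval : ∀ p : EuclideanSpace ℝ (Fin d), (fderiv ℝ f p) v = (inner ℝ (gradient f p) v : ℝ) := by
    intro p
    have := (hdiff p).hasGradientAt.hasFDerivAt.fderiv
    rw [this, InnerProductSpace.toDual_apply_apply]
  have hc : ∀ t : ℝ, HasDerivAt (fun t : ℝ => x + t • v) v t := by
    intro t
    simpa using ((hasDerivAt_id t).smul_const v).const_add x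
  set ψ : ℝ → ℝ := fun t => f x + t * (inner ℝ (gradient f x) v : ℝ)
      + L / 2 * t ^ 2 * ‖v‖ ^ 2 - f (x + t • v) with hψdef
  have hψ : ∀ t : ℝ, HasDerivAt ψ
      ((inner ℝ (gradient f x) v : ℝ) + L * t * ‖v‖ ^ 2
        - (inner ℝ (gradient f (x + t • v)) v : ℝ)) t := by
    intro t
    have h1 : HasDerivAt (fun t : ℝ => f (x + t • v))
        ((inner ℝ (gradient f (x + t • v)) v : ℝ)) t := by
      have := ((hdiff (x + t • v)).hasFDerivAt).comp_hasDerivAt t (hc t)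
      rw [← hval]; exact this
    have h2 : HasDerivAt (fun t : ℝ => f x + t * (inner ℝ (gradient f x) v : ℝ)
        + L / 2 * t ^ 2 * ‖v‖ ^ 2)
        ((inner ℝ (gradient f x) v : ℝ) + L * t * ‖v‖ ^ 2) t := by
      have ha : HasDerivAt (fun t : ℝ => t * (inner ℝ (gradient f x) v : ℝ))
          ((inner ℝ (gradient f x) v : ℝ)) t := by
        simpa using (hasDerivAt_id t).mul_const (inner ℝ (gradient f x) v : ℝ)
      have hb : HasDerivAt (fun t : ℝ => L / 2 * t ^ 2 * ‖v‖ ^ 2)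
          (L * t * ‖v‖ ^ 2) t := by
        have h := ((hasDerivAt_pow 2 t).const_mul (L / 2)).mul_const (‖v‖ ^ 2)
        norm_num at h
        refine h.congr_deriv ?_
        ring
      exact (ha.const_add (f x)).add hb
    exact h2.sub h1
  have hmono : MonotoneOn ψ (Set.Icc (0:ℝ) 1) := by
    apply monotoneOn_of_deriv_nonneg (convex_Icc 0 1)
    · exact (fun t _ => (hψ t).differentiableAt.continuousAt.continuousWithinAt)
    · intro t _
      exact (hψ t).differentiableAt.differentiableWithinAt
    · intro t ht
      rw [interior_Icc] at ht
      rw [(hψ t).deriv]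
      have key : (inner ℝ (gradient f (x + t • v)) v : ℝ) - (inner ℝ (gradient f x) v : ℝ)
          ≤ L * t * ‖v‖ ^ 2 := by
        have h1 : (inner ℝ (gradient f (x + t • v)) v : ℝ) - (inner ℝ (gradient f x) v : ℝ)
            = (inner ℝ (gradient f (x + t • v) - gradient f x) v : ℝ) := by
          rw [inner_sub_left]
        rw [h1]
        calc (inner ℝ (gradient f (x + t • v) - gradient f x) v : ℝ)
            ≤ ‖gradient f (x + t • v) - gradient f x‖ * ‖v‖ := real_inner_le_norm _ _
          _ ≤ (L * ‖(x + t • v) - x‖) * ‖v‖ := by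
              apply mul_le_mul_of_nonneg_right (hlip _ _) (norm_nonneg _)
          _ = L * t * ‖v‖ ^ 2 := by
              rw [show (x + t • v) - x = t • v by abel, norm_smul]
              simp [abs_of_pos ht.1]; ring
      linarith
  have h01 := hmono (Set.mem_Icc.2 ⟨le_rfl, zero_le_one⟩) (Set.mem_Icc.2 ⟨zero_le_one, le_rfl⟩) zero_le_one
  have hψ0 : ψ 0 = 0 := by simp [hψdef]
  have hψ1 : ψ 1 = f x + (inner ℝ (gradient f x) v : ℝ) + L / 2 * ‖v‖ ^ 2 - f y := by
    simp [hψdef, hv]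
  rw [hψ0, hψ1] at h01
  linarith

lemma step_lemma {d : ℕ} (f : EuclideanSpace ℝ (Fin d) → ℝ) (L η r : ℝ)
    (hdiff : Differentiable ℝ f)
    (hlip : ∀ x y, ‖gradient f x - gradient f y‖ ≤ L * ‖x - y‖)
    (hL : 0 < L) (hη : 0 < η) (hηL : η ≤ 1 / L)
    (xi w z : EuclideanSpace ℝ (Fin d)) (hz : ‖z‖ ≤ r) :
    f (xi - η • w + z) ≤ f xi - η / 2 * ‖gradient f xi‖ ^ 2
      + η * ‖gradient f xi - w‖ ^ 2 + r ^ 2 / η := by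
  set g := gradient f xi with hg
  set y := xi - η • w + z with hy
  have hdesc := descent_lemma f L hL.le hdiff hlip xi y
  have hδ : y - xi = z - η • w := by rw [hy]; abel
  rw [hδ] at hdesc
  -- abbreviations
  set A : ℝ := inner ℝ g w with hA
  set B : ℝ := inner ℝ g z with hB
  set C : ℝ := inner ℝ w z with hC
  have hinner : (inner ℝ g (z - η • w) : ℝ) = B - η * A := by
    rw [inner_sub_right, real_inner_smul_right]
  have hS : ‖z - η • w‖ ^ 2 = ‖z‖ ^ 2 - 2 * (η * C) + η ^ 2 * ‖w‖ ^ 2 := by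
    rw [norm_sub_sq_real, real_inner_smul_right, norm_smul]
    rw [real_inner_comm, Real.norm_eq_abs, abs_of_pos hη]
    ring
  have hD : ‖g - w‖ ^ 2 = ‖g‖ ^ 2 - 2 * A + ‖w‖ ^ 2 := by
    rw [norm_sub_sq_real]
  have hBC : B - C ≤ ‖g - w‖ * ‖z‖ := by
    have : B - C = (inner ℝ (g - w) z : ℝ) := by rw [inner_sub_left]
    rw [this]
    exact real_inner_le_norm _ _
  have hLη : L * η ≤ 1 := by
    rw [le_div_iff₀ hL] at hηL; linarith [mul_comm L η]
  have hLS : L / 2 * ‖z - η • w‖ ^ 2 ≤ 1 / (2 * η) * ‖z - η • w‖ ^ 2 := by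
    apply mul_le_mul_of_nonneg_right _ (sq_nonneg _)
    rw [div_le_div_iff₀ (by norm_num) (by positivity)]
    nlinarith
  have hz0 : 0 ≤ ‖z‖ := norm_nonneg _
  have hzr : ‖z‖ ^ 2 ≤ r ^ 2 := by nlinarith
  have hamgm : ‖g - w‖ * ‖z‖ ≤ η / 2 * ‖g - w‖ ^ 2 + ‖z‖ ^ 2 / (2 * η) := by
    have hid : η / 2 * ‖g - w‖ ^ 2 + ‖z‖ ^ 2 / (2 * η) - ‖g - w‖ * ‖z‖
        = (η * ‖g - w‖ - ‖z‖) ^ 2 / (2 * η) := by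
      field_simp
      ring
    have hnn : 0 ≤ (η * ‖g - w‖ - ‖z‖) ^ 2 / (2 * η) :=
      div_nonneg (sq_nonneg _) (by positivity)
    linarith
  rw [hinner] at hdesc
  have hkey : f y ≤ f xi - η * A + B + 1 / (2 * η) * ‖z - η • w‖ ^ 2 := by linarith
  rw [hS] at hkey
  have hexp : f y ≤ f xi - η * A + (B - C) + ‖z‖ ^ 2 / (2 * η) + η / 2 * ‖w‖ ^ 2 := by
    have : 1 / (2 * η) * (‖z‖ ^ 2 - 2 * (η * C) + η ^ 2 * ‖w‖ ^ 2)
        = ‖z‖ ^ 2 / (2 * η) - C + η / 2 * ‖w‖ ^ 2 := by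
      field_simp
    rw [this] at hkey
    linarith
  have h2 : f y ≤ f xi - η * A + η / 2 * ‖g - w‖ ^ 2 + ‖z‖ ^ 2 / η + η / 2 * ‖w‖ ^ 2 := by
    have : ‖z‖ ^ 2 / (2 * η) + ‖z‖ ^ 2 / (2 * η) = ‖z‖ ^ 2 / η := by field_simp; ring
    linarith
  have hzη : ‖z‖ ^ 2 / η ≤ r ^ 2 / η := by gcongr
  have hDη : η / 2 * ‖g - w‖ ^ 2 = η / 2 * ‖g‖ ^ 2 - η * A + η / 2 * ‖w‖ ^ 2 := by
    rw [hD]; ring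
  linarith

theorem sum_gradient_norm_sq_bound {d : ℕ} (f : EuclideanSpace ℝ (Fin d) → ℝ)
    (L η r fstar : ℝ) (T : ℕ)
    (hdiff : Differentiable ℝ f)
    (hlip : ∀ x y, ‖gradient f x - gradient f y‖ ≤ L * ‖x - y‖)
    (hL : 0 < L) (hη : 0 < η) (hηL : η ≤ 1 / L)
    (hfstar : ∀ x, fstar ≤ f x)
    (x v ξ : ℕ → EuclideanSpace ℝ (Fin d))
    (hξ : ∀ t, ‖ξ t‖ ≤ r)
    (hrec : ∀ t, 1 ≤ t → t ≤ T → x t = x (t - 1) - η • v (t - 1) + ξ t) :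
    η / 2 * ∑ t ∈ Finset.Icc 1 T, ‖gradient f (x (t - 1))‖ ^ 2 ≤
      f (x 0) - fstar +
        η * ∑ t ∈ Finset.Icc 1 T, ‖gradient f (x (t - 1)) - v (t - 1)‖ ^ 2 +
        (T : ℝ) * r ^ 2 / η := by
  have e1 : ∑ t ∈ Finset.Icc 1 T, ‖gradient f (x (t - 1))‖ ^ 2
      = ∑ i ∈ Finset.range T, ‖gradient f (x i)‖ ^ 2 := by
    rw [← Finset.Ico_add_one_right_eq_Icc, Finset.sum_Ico_eq_sum_range]; simp
  have e2 : ∑ t ∈ Finset.Icc 1 T, ‖gradient f (x (t - 1)) - v (t - 1)‖ ^ 2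
      = ∑ i ∈ Finset.range T, ‖gradient f (x i) - v i‖ ^ 2 := by
    rw [← Finset.Ico_add_one_right_eq_Icc, Finset.sum_Ico_eq_sum_range]; simp
  rw [e1, e2]
  have hstep : ∀ i, i < T → f (x (i + 1)) ≤ f (x i) - η / 2 * ‖gradient f (x i)‖ ^ 2
      + η * ‖gradient f (x i) - v i‖ ^ 2 + r ^ 2 / η := by
    intro i hi
    have h := hrec (i + 1) (by omega) (by omega)
    simp only [Nat.add_sub_cancel] at h
    rw [h]
    exact step_lemma f L η r hdiff hlip hL hη hηL _ _ _ (hξ (i + 1))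
  have htel : f (x T) - f (x 0) ≤ ∑ i ∈ Finset.range T,
      (-(η / 2 * ‖gradient f (x i)‖ ^ 2) + η * ‖gradient f (x i) - v i‖ ^ 2 + r ^ 2 / η) := by
    rw [← Finset.sum_range_sub (fun i => f (x i))]
    apply Finset.sum_le_sum
    intro i hi
    have := hstep i (Finset.mem_range.mp hi)
    linarith
  have hsum : ∑ i ∈ Finset.range T,
      (-(η / 2 * ‖gradient f (x i)‖ ^ 2) + η * ‖gradient f (x i) - v i‖ ^ 2 + r ^ 2 / η)
      = -(η / 2 * ∑ i ∈ Finset.range T, ‖gradient f (x i)‖ ^ 2)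
        + η * ∑ i ∈ Finset.range T, ‖gradient f (x i) - v i‖ ^ 2
        + (T : ℝ) * (r ^ 2 / η) := by
    rw [Finset.sum_add_distrib, Finset.sum_add_distrib, Finset.sum_const, Finset.sum_neg_distrib,
      ← Finset.mul_sum, ← Finset.mul_sum, Finset.card_range, nsmul_eq_mul]
  rw [hsum] at htel
  have hT := hfstar (x T)
  have : (T : ℝ) * r ^ 2 / η = (T : ℝ) * (r ^ 2 / η) := by ring
  rw [this]
  linarith
end
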